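/- Let M and V be real n×n matrices with M symmetric positive definite and V symmetric and invertible. If V has an even number of negative eigenvalues (counting multiplicity), then there exists a real skew-symmetric n×n matrix S such that every λ ∈ ℂ with det(λ²M + λS + V) = 0 has real part equal to zero; i.e. S can be chosen so that the origin of the Chetaev system Mq̈ + Sq̇ + Vq = 0 is spectrally stable. -/

import Mathlib

open Matrix Complex

private lemma imre {t : ℝ} (ht : 0 < t) {lam : ℂ} (h : lam ^ 2 + (t : ℂ) = 0) : lam.re = 0 := by
  have h2 : lam ^ 2 = -(t : ℂ) := by linear_combination h
  have him : lam.re * lam.im + lam.im * lam.re = 0 := by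
    have := congrArg Complex.im h2
    simpa [pow_two, Complex.mul_im] using this
  have hre : lam.re * lam.re - lam.im * lam.im = -t := by
    have := congrArg Complex.re h2
    simpa [pow_two, Complex.mul_re] using this
  rcases mul_eq_zero.mp (show lam.re * lam.im = 0 by linarith) with h0 | h0
  · exact h0
  · nlinarith

private lemma parity_lemma {ι : Type*} [DecidableEq ι] (f : ι → ℝ) (s : Finset ι)
    (hs : ∀ i ∈ s, f i ≠ 0) :
    (0 < ∏ i ∈ s, f i ↔ Even (s.filter fun i => f i < 0).card) := by
  induction s using Finset.induction_on with
  | empty => simp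
  | @insert a s ha ih =>
    have hfa : f a ≠ 0 := hs a (Finset.mem_insert_self a s)
    have hs' : ∀ i ∈ s, f i ≠ 0 := fun i hi => hs i (Finset.mem_insert_of_mem hi)
    have hprod : ∏ i ∈ s, f i ≠ 0 := Finset.prod_ne_zero_iff.mpr hs'
    rw [Finset.prod_insert ha, Finset.filter_insert]
    by_cases hlt : f a < 0
    · rw [if_pos hlt,
        Finset.card_insert_of_notMem (fun hm => ha (Finset.mem_of_mem_filter a hm)),
        Nat.even_add_one, ← ih hs']
      constructor
      · intro hpos hpos2
        nlinarith
      · intro hnp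
        rcases hprod.lt_or_gt with h1 | h1
        · nlinarith
        · exact absurd h1 hnp
    · rw [if_neg hlt, ← ih hs']
      have hpa : 0 < f a := lt_of_le_of_ne (not_lt.mp hlt) (Ne.symm hfa)
      constructor
      · intro h1
        rcases hprod.lt_or_gt with h2 | h2
        · nlinarith
        · exact h2
      · intro h1
        exact mul_pos hpa h1

private lemma block_root {a b : ℝ} (ha : 0 < a) (hb : 0 < b) {lam : ℂ}
    (h : (lam ^ 2 + (-a : ℝ)) * (lam ^ 2 + (-b : ℝ)) -
      lam * ((Real.sqrt a + Real.sqrt b : ℝ) : ℂ) * (-(lam * ((Real.sqrt a + Real.sqrt b : ℝ) : ℂ))) = 0) :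
    lam.re = 0 := by
  have hsa : ((Real.sqrt a : ℝ) : ℂ) ^ 2 = ((a : ℝ) : ℂ) := by
    norm_cast
    exact Real.sq_sqrt ha.le
  have hsb : ((Real.sqrt b : ℝ) : ℂ) ^ 2 = ((b : ℝ) : ℂ) := by
    norm_cast
    exact Real.sq_sqrt hb.le
  have key : (lam ^ 2 + ((Real.sqrt a * Real.sqrt b : ℝ) : ℂ)) ^ 2 = 0 := by
    push_cast at h ⊢
    linear_combination h + (((Real.sqrt b : ℝ) : ℂ) ^ 2 - lam ^ 2) * hsa
      + (((a : ℝ) : ℂ) - lam ^ 2) * hsb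
  have h2 : lam ^ 2 + ((Real.sqrt a * Real.sqrt b : ℝ) : ℂ) = 0 :=
    pow_eq_zero_iff two_ne_zero |>.mp key
  exact imre (mul_pos (Real.sqrt_pos.mpr ha) (Real.sqrt_pos.mpr hb)) h2

private lemma key {n : ℕ} (d : Fin n → ℝ) (hd : ∀ i, d i ≠ 0)
    (heven : Even (Finset.univ.filter fun i => d i < 0).card) :
    ∃ S₀ : Matrix (Fin n) (Fin n) ℝ, S₀ᵀ = -S₀ ∧ ∀ lam : ℂ,
      (lam ^ 2 • (1 : Matrix (Fin n) (Fin n) ℂ) + lam • S₀.map Complex.ofReal +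
        Matrix.diagonal (fun i => (d i : ℂ))).det = 0 → lam.re = 0 := by
  classical
  obtain ⟨m, hm⟩ := heven
  set p : Fin n → Prop := fun i => d i < 0 with hp
  have hcard : Fintype.card {i // p i} = 2 * m := by
    rw [Fintype.card_subtype]
    rw [show (Finset.univ.filter fun i => p i) = (Finset.univ.filter fun i => d i < 0) from rfl]
    omega
  let eneg : (Fin 2 × Fin m) ≃ {i // p i} :=
    finProdFinEquiv.trans (Fintype.equivFinOfCardEq hcard).symm
  let E : (Fin 2 × Fin m) ⊕ {i // ¬ p i} ≃ Fin n :=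
    (Equiv.sumCongr eneg (Equiv.refl _)).trans (Equiv.sumCompl p)
  have hEinl : ∀ z : Fin 2 × Fin m, E (Sum.inl z) = (eneg z : Fin n) := by
    intro z; simp [E]
  have hEinr : ∀ i : {i // ¬ p i}, E (Sum.inr i) = (i : Fin n) := by
    intro i; simp [E]
  let a : Fin m → ℝ := fun j => -d (E (Sum.inl (0, j)))
  let b : Fin m → ℝ := fun j => -d (E (Sum.inl (1, j)))
  have hA : ∀ j, 0 < a j := by
    intro j
    have := (eneg (0, j)).2
    simp only [a, hEinl]
    linarith [this]
  have hB : ∀ j, 0 < b j := by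
    intro j
    have := (eneg (1, j)).2
    simp only [b, hEinl]
    linarith [this]
  let c : Fin m → ℝ := fun j => Real.sqrt (a j) + Real.sqrt (b j)
  let blk : Fin m → Matrix (Fin 2) (Fin 2) ℝ := fun j => !![0, c j; -(c j), 0]
  let S₀ : Matrix (Fin n) (Fin n) ℝ :=
    (fromBlocks (blockDiagonal blk) 0 0 0).submatrix E.symm E.symm
  refine ⟨S₀, ?_, ?_⟩
  · show S₀ᵀ = -S₀
    ext i j
    rcases hx : E.symm i with z | u <;> rcases hy : E.symm j with w | v
    · obtain ⟨x, jz⟩ := z; obtain ⟨y, jw⟩ := w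
      by_cases hj : jz = jw
      · subst hj
        fin_cases x <;> fin_cases y <;>
          simp [S₀, hx, hy, blockDiagonal_apply, blk]
      · simp [S₀, hx, hy, blockDiagonal_apply, hj, Ne.symm hj]
    · simp [S₀, hx, hy]
    · simp [S₀, hx, hy]
    · simp [S₀, hx, hy]
  · intro lam hdet
    set dc : Fin n → ℂ := fun i => (d i : ℂ) with hdc
    set T : Matrix (Fin n) (Fin n) ℂ :=
      lam ^ 2 • 1 + lam • S₀.map Complex.ofReal + Matrix.diagonal dc with hT
    have hTE : T.submatrix E E =
        fromBlocks
          (blockDiagonal fun j => lam ^ 2 • (1 : Matrix (Fin 2) (Fin 2) ℂ)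
            + lam • (blk j).map Complex.ofReal
            + Matrix.diagonal (fun x : Fin 2 => dc (E (Sum.inl (x, j)))))
          0 0
          (Matrix.diagonal fun i : {i // ¬ p i} => lam ^ 2 + dc (E (Sum.inr i))) := by
      ext i j
      rcases i with ⟨x, jx⟩ | u <;> rcases j with ⟨y, jy⟩ | v
      · by_cases hj : jx = jy
        · subst hj
          by_cases hxy : x = y
          · subst hxy
            simp [T, S₀, blockDiagonal_apply, Matrix.one_apply, Matrix.diagonal_apply]
          · simp [T, S₀, blockDiagonal_apply, Matrix.one_apply, Matrix.diagonal_apply,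
              hxy, Prod.ext_iff]
        · simp [T, S₀, blockDiagonal_apply, Matrix.one_apply, Matrix.diagonal_apply,
            hj, Prod.ext_iff]
      · simp [T, S₀, Matrix.one_apply, Matrix.diagonal_apply]
      · simp [T, S₀, Matrix.one_apply, Matrix.diagonal_apply]
      · by_cases huv : u = v
        · subst huv
          simp [T, S₀, Matrix.one_apply, Matrix.diagonal_apply]
        · simp [T, S₀, Matrix.one_apply, Matrix.diagonal_apply, huv]
    have hdet2 : T.det = 0 := hdet
    rw [← Matrix.det_submatrix_equiv_self E T, hTE, det_fromBlocks_zero₂₁,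
      Matrix.det_blockDiagonal, Matrix.det_diagonal] at hdet2
    rcases mul_eq_zero.mp hdet2 with h0 | h0
    · obtain ⟨j, -, hj⟩ := Finset.prod_eq_zero_iff.mp h0
      have hblkdet : (lam ^ 2 • (1 : Matrix (Fin 2) (Fin 2) ℂ)
            + lam • (blk j).map Complex.ofReal
            + Matrix.diagonal (fun x : Fin 2 => dc (E (Sum.inl (x, j))))) =
          !![lam ^ 2 + ((-a j : ℝ) : ℂ), lam * ((c j : ℝ) : ℂ);
             -(lam * ((c j : ℝ) : ℂ)), lam ^ 2 + ((-b j : ℝ) : ℂ)] := by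
        ext x y
        fin_cases x <;> fin_cases y <;>
          simp [blk, dc, Matrix.one_apply, a, b] <;> push_cast <;> ring
      rw [hblkdet, Matrix.det_fin_two_of] at hj
      exact block_root (hA j) (hB j) hj
    · obtain ⟨i, -, hi⟩ := Finset.prod_eq_zero_iff.mp h0
      have hipos : 0 < d (E (Sum.inr i)) := by
        rw [hEinr]
        rcases (hd i).lt_or_gt with h1 | h1
        · exact absurd h1 i.2
        · exact h1
      exact imre hipos hi

open scoped MatrixOrder in
private lemma exists_sqrt_mat {n : ℕ} {M : Matrix (Fin n) (Fin n) ℝ} (hM : M.PosDef) :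
    ∃ L : Matrix (Fin n) (Fin n) ℝ, L * L = M ∧ L.IsHermitian :=
  ⟨CFC.sqrt M, CFC.sqrt_mul_sqrt_self M hM.posSemidef.nonneg, (CFC.sqrt_nonneg M).posSemidef.1⟩

/-- If V is symmetric, invertible, and has an even number of negative eigenvalues
(with multiplicity), then there is a skew-symmetric S such that every complex root λ
of det(λ²M + λS + V) = 0 is purely imaginary: the Chetaev system Mq̈ + Sq̇ + Vq = 0
can be gyroscopically (spectrally) stabilized. -/
theorem stmt3 {n : ℕ} (M V : Matrix (Fin n) (Fin n) ℝ)
    (hM : M.PosDef) (hV : V.IsHermitian) (hVdet : V.det ≠ 0)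
    (heven : Even (Finset.univ.filter fun i => hV.eigenvalues i < 0).card) :
    ∃ S : Matrix (Fin n) (Fin n) ℝ, Sᵀ = -S ∧
      ∀ lam : ℂ,
        (lam ^ 2 • M.map Complex.ofReal + lam • S.map Complex.ofReal +
          V.map Complex.ofReal).det = 0 → lam.re = 0 := by
  have hVeig : V.det = ∏ i, hV.eigenvalues i := by
    simpa using hV.det_eq_prod_eigenvalues
  have hVne : ∀ i ∈ Finset.univ, hV.eigenvalues i ≠ 0 := by
    rw [hVeig] at hVdet
    exact Finset.prod_ne_zero_iff.mp hVdet
  have hVpos : 0 < V.det := by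
    rw [hVeig]
    exact (parity_lemma hV.eigenvalues Finset.univ hVne).mpr heven
  -- the square root of M
  obtain ⟨L, hLL, hLher⟩ := exists_sqrt_mat hM
  have hLT : Lᵀ = L := by
    rw [← Matrix.conjTranspose_eq_transpose_of_trivial]
    exact hLher
  have hLdet : L.det ≠ 0 := by
    intro h0
    have : M.det = 0 := by rw [← hLL, Matrix.det_mul, h0, mul_zero]
    exact hM.det_pos.ne' this
  have hLunit : IsUnit L.det := isUnit_iff_ne_zero.mpr hLdet
  set V₁ : Matrix (Fin n) (Fin n) ℝ := L⁻¹ * V * L⁻¹ with hV₁def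
  have hLVL : L * V₁ * L = V := by
    rw [hV₁def]
    calc L * (L⁻¹ * V * L⁻¹) * L = (L * L⁻¹) * V * (L⁻¹ * L) := by
          simp only [mul_assoc]
      _ = V := by rw [Matrix.mul_nonsing_inv _ hLunit, Matrix.nonsing_inv_mul _ hLunit,
          one_mul, mul_one]
  have hV₁ : V₁.IsHermitian := by
    show V₁ᴴ = V₁
    rw [hV₁def]
    rw [Matrix.conjTranspose_mul, Matrix.conjTranspose_mul,
      Matrix.conjTranspose_nonsing_inv, hLher.eq, hV.eq, mul_assoc]
  have hdetV₁ : 0 < V₁.det := by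
    have h2 : V₁.det = V.det * (L.det⁻¹) ^ 2 := by
      rw [hV₁def, Matrix.det_mul, Matrix.det_mul, Matrix.det_nonsing_inv,
        Ring.inverse_eq_inv']
      ring
    rw [h2]
    have h3 : 0 < (L.det⁻¹) ^ 2 := pow_two_pos_of_ne_zero (inv_ne_zero hLdet)
    exact mul_pos hVpos h3
  set d : Fin n → ℝ := hV₁.eigenvalues with hddef
  have hprodd : V₁.det = ∏ i, d i := by simpa using hV₁.det_eq_prod_eigenvalues
  have hd' : ∀ i ∈ Finset.univ, d i ≠ 0 := by
    have := hdetV₁.ne'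
    rw [hprodd] at this
    exact Finset.prod_ne_zero_iff.mp this
  have hd : ∀ i, d i ≠ 0 := fun i => hd' i (Finset.mem_univ i)
  have heven' : Even (Finset.univ.filter fun i => d i < 0).card := by
    refine (parity_lemma d Finset.univ hd').mp ?_
    rw [← hprodd]
    exact hdetV₁
  obtain ⟨S₀, hskew₀, hroots⟩ := key d hd heven'
  set U : Matrix (Fin n) (Fin n) ℝ := (hV₁.eigenvectorUnitary : Matrix (Fin n) (Fin n) ℝ)
    with hUdef
  have hspec : V₁ = U * Matrix.diagonal d * Uᵀ := by
    have h := hV₁.spectral_theorem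
    rw [Unitary.conjStarAlgAut_apply, ← hUdef] at h
    rw [show star U = Uᵀ by
        rw [Matrix.star_eq_conjTranspose, Matrix.conjTranspose_eq_transpose_of_trivial]] at h
    simpa using h
  have hUU : U * Uᵀ = 1 := by
    have := Matrix.mem_unitaryGroup_iff.mp hV₁.eigenvectorUnitary.2
    rwa [Matrix.star_eq_conjTranspose, Matrix.conjTranspose_eq_transpose_of_trivial] at this
  have hUdet : U.det ≠ 0 := by
    intro h0
    have := congrArg Matrix.det hUU
    rw [Matrix.det_mul, h0, zero_mul, Matrix.det_one] at this
    exact zero_ne_one this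
  obtain ⟨P, hPdef⟩ : ∃ P : Matrix (Fin n) (Fin n) ℝ, P = L * U := ⟨_, rfl⟩
  obtain ⟨Q, hQdef⟩ : ∃ Q : Matrix (Fin n) (Fin n) ℝ, Q = Uᵀ * L := ⟨_, rfl⟩
  have hPQ : P * Q = M := by
    rw [hPdef, hQdef]
    calc L * U * (Uᵀ * L) = L * (U * Uᵀ) * L := by simp only [mul_assoc]
      _ = M := by rw [hUU, mul_one, hLL]
  have hPDQ : P * Matrix.diagonal d * Q = V := by
    rw [hPdef, hQdef]
    calc L * U * Matrix.diagonal d * (Uᵀ * L)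
        = L * (U * Matrix.diagonal d * Uᵀ) * L := by simp only [mul_assoc]
      _ = V := by rw [← hspec, hLVL]
  refine ⟨P * S₀ * Q, ?_, ?_⟩
  · have hPT : Qᵀ = P := by rw [hQdef, Matrix.transpose_mul, Matrix.transpose_transpose, hLT, ← hPdef]
    have hQT : Pᵀ = Q := by rw [hPdef, Matrix.transpose_mul, hLT, ← hQdef]
    rw [Matrix.transpose_mul, Matrix.transpose_mul, hPT, hQT, hskew₀]
    simp [mul_assoc]
  · intro lam hdet
    have hdetmapP : (P.map Complex.ofReal).det ≠ 0 := by
      rw [show P.map Complex.ofReal = Complex.ofRealHom.mapMatrix P from rfl,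
        ← RingHom.map_det]
      simp [hPdef, Matrix.det_mul, hLdet, hUdet]
    have hdetmapQ : (Q.map Complex.ofReal).det ≠ 0 := by
      rw [show Q.map Complex.ofReal = Complex.ofRealHom.mapMatrix Q from rfl,
        ← RingHom.map_det]
      simp [hQdef, Matrix.det_mul, hLdet, hUdet, Matrix.det_transpose]
    have hmul : ∀ A B : Matrix (Fin n) (Fin n) ℝ,
        (A * B).map Complex.ofReal = A.map Complex.ofReal * B.map Complex.ofReal := by
      intro A B
      exact Matrix.map_mul (f := Complex.ofRealHom)
    have hfact : lam ^ 2 • M.map Complex.ofReal + lam • (P * S₀ * Q).map Complex.ofReal +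
        V.map Complex.ofReal =
        (P.map Complex.ofReal) *
          (lam ^ 2 • (1 : Matrix (Fin n) (Fin n) ℂ) + lam • S₀.map Complex.ofReal +
            Matrix.diagonal (fun i => (d i : ℂ))) * (Q.map Complex.ofReal) := by
      have hM' : M.map Complex.ofReal = P.map Complex.ofReal * Q.map Complex.ofReal := by
        rw [← hmul, hPQ]
      have hS' : (P * S₀ * Q).map Complex.ofReal =
          P.map Complex.ofReal * S₀.map Complex.ofReal * Q.map Complex.ofReal := by
        rw [← hmul, ← hmul]
      have hV' : V.map Complex.ofReal =
          P.map Complex.ofReal * Matrix.diagonal (fun i => (d i : ℂ)) * Q.map Complex.ofReal := by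
        rw [show Matrix.diagonal (fun i => (d i : ℂ)) =
            (Matrix.diagonal d).map Complex.ofReal by rw [Matrix.diagonal_map (by simp)],
          ← hmul, ← hmul, hPDQ]
      rw [hM', hS', hV']
      simp only [Matrix.mul_add, Matrix.add_mul, mul_smul_comm, smul_mul_assoc,
        Matrix.mul_one, mul_assoc]
    rw [hfact, Matrix.det_mul, Matrix.det_mul] at hdet
    rcases mul_eq_zero.mp hdet with h1 | h1
    · rcases mul_eq_zero.mp h1 with h2 | h2
      · exact absurd h2 hdetmapP
      · exact hroots lam h2
    · exact absurd h1 hdetmapQ
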